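/- Let f and f̂ be probability densities represented by two tree-structured SPNs over an n-dimensional product domain that have the same structure, with k mixing weights and e leaves in total. Let N be a subset of the leaf indices, and let ε′, α ∈ [0,1]. Suppose every pair of corresponding leaves fᵢ, f̂ᵢ with i ∉ N satisfies TV(fᵢ, f̂ᵢ) ≤ ε′, and every pair of corresponding mixing weights satisfies |ŵⱼ − wⱼ| ≤ α. Then TV(f, f̂) ≤ Σ_{i ∈ N} Wᵢ + nε′ + kα/2, where Wᵢ denotes the path weight of the i-th leaf in f. -/

import Mathlib

open MeasureTheory

inductive SPN (n : ℕ) (X : Type) : Type where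
  | leaf (d : ℕ) (emb : Fin d ↪ Fin n) (g : (Fin d → X) → ℝ)
  | prod (m : ℕ) (children : Fin m → SPN n X)
  | sum (m : ℕ) (w : Fin m → ℝ) (children : Fin m → SPN n X)

namespace SPN

variable {n : ℕ} {X : Type}

def scope : SPN n X → Finset (Fin n)
  | .leaf _ emb _ => Finset.univ.map emb
  | .prod _ c => Finset.univ.biUnion fun i => (c i).scope
  | .sum _ _ c => Finset.univ.biUnion fun i => (c i).scope

noncomputable def density : SPN n X → (Fin n → X) → ℝ
  | .leaf _ emb g => fun x => g fun j => x (emb j)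
  | .prod _ c => fun x => ∏ i, (c i).density x
  | .sum _ w c => fun x => ∑ i, w i * (c i).density x

def numLeaves : SPN n X → ℕ
  | .leaf _ _ _ => 1
  | .prod _ c => ∑ i, (c i).numLeaves
  | .sum _ _ c => ∑ i, (c i).numLeaves

def numWeights : SPN n X → ℕ
  | .leaf _ _ _ => 0
  | .prod _ c => ∑ i, (c i).numWeights
  | .sum m _ c => m + ∑ i, (c i).numWeights

def LeafT (n : ℕ) (X : Type) : Type := Σ d : ℕ, (Fin d ↪ Fin n) × ((Fin d → X) → ℝ)

instance : Inhabited (LeafT n X) := ⟨⟨0, Function.Embedding.ofIsEmpty, fun _ => 0⟩⟩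

def leaves : SPN n X → List (LeafT n X)
  | .leaf d emb g => [⟨d, emb, g⟩]
  | .prod _ c => (List.ofFn fun i => (c i).leaves).flatten
  | .sum _ _ c => (List.ofFn fun i => (c i).leaves).flatten

noncomputable def pathWeights : SPN n X → List ℝ
  | .leaf _ _ _ => [1]
  | .prod _ c => (List.ofFn fun i => (c i).pathWeights).flatten
  | .sum _ w c => (List.ofFn fun i => ((c i).pathWeights).map fun r => w i * r).flatten

def weightsList : SPN n X → List ℝ
  | .leaf _ _ _ => []
  | .prod _ c => (List.ofFn fun i => (c i).weightsList).flatten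
  | .sum _ w c => (List.ofFn fun i => w i) ++ (List.ofFn fun i => (c i).weightsList).flatten

variable [MeasurableSpace X]

def WF (ν : Measure X) [SigmaFinite ν] : SPN n X → Prop
  | .leaf d _ g => (∀ y, 0 ≤ g y) ∧ Measurable g ∧
      ∫ y, g y ∂(Measure.pi fun _ : Fin d => ν) = 1
  | .prod m c => 0 < m ∧ (∀ i, (c i).WF ν) ∧
      ∀ i j, i ≠ j → Disjoint ((c i).scope) ((c j).scope)
  | .sum m w c => 0 < m ∧ (∀ i, (c i).WF ν) ∧ (∀ i j, (c i).scope = (c j).scope) ∧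
      (∀ i, 0 ≤ w i) ∧ ∑ i, w i = 1

inductive SameStruct : SPN n X → SPN n X → Prop
  | leaf (d : ℕ) (emb : Fin d ↪ Fin n) (g g' : (Fin d → X) → ℝ) :
      SameStruct (.leaf d emb g) (.leaf d emb g')
  | prod (m : ℕ) (c c' : Fin m → SPN n X) (h : ∀ i, SameStruct (c i) (c' i)) :
      SameStruct (.prod m c) (.prod m c')
  | sum (m : ℕ) (w w' : Fin m → ℝ) (c c' : Fin m → SPN n X)
      (h : ∀ i, SameStruct (c i) (c' i)) :
      SameStruct (.sum m w c) (.sum m w' c')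

noncomputable def leafTV (ν : Measure X) [SigmaFinite ν] (L L' : LeafT n X) : ℝ :=
  if h : L'.1 = L.1 then
    (1/2) * ∫ y, |L.2.2 y - L'.2.2 fun j => y (Fin.cast h j)|
      ∂(Measure.pi fun _ : Fin L.1 => ν)
  else 1

noncomputable def tv (ν : Measure X) [SigmaFinite ν] (f g : (Fin n → X) → ℝ) : ℝ :=
  (1/2) * ∫ x, |f x - g x| ∂(Measure.pi fun _ : Fin n => ν)

end SPN

namespace SPNAux

open SPN MeasureTheory ENNReal

variable {n : ℕ} {X : Type} [MeasurableSpace X]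

/-! ### Basic structural lemmas -/

theorem density_dependsOn (t : SPN n X) :
    ∀ x y : Fin n → X, (∀ i ∈ t.scope, x i = y i) → t.density x = t.density y := by
  induction t with
  | leaf d emb g =>
    intro x y h
    simp only [SPN.density]
    congr 1; funext j
    exact h _ (by simp [SPN.scope])
  | prod m c ih =>
    intro x y h
    simp only [SPN.density]
    refine Finset.prod_congr rfl fun i _ => ih i x y fun j hj => h j ?_
    simp only [SPN.scope, Finset.mem_biUnion]
    exact ⟨i, Finset.mem_univ i, hj⟩
  | sum m w c ih =>
    intro x y h
    simp only [SPN.density]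
    refine Finset.sum_congr rfl fun i _ => ?_
    rw [ih i x y fun j hj => h j ?_]
    simp only [SPN.scope, Finset.mem_biUnion]
    exact ⟨i, Finset.mem_univ i, hj⟩

variable (ν : Measure X) [SigmaFinite ν]

theorem density_nonneg {t : SPN n X} (ht : t.WF ν) : ∀ x, 0 ≤ t.density x := by
  induction t with
  | leaf d emb g => intro x; exact ht.1 _
  | prod m c ih =>
    intro x
    exact Finset.prod_nonneg fun i _ => ih i (ht.2.1 i) x
  | sum m w c ih =>
    intro x
    exact Finset.sum_nonneg fun i _ => mul_nonneg (ht.2.2.2.1 i) (ih i (ht.2.1 i) x)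

theorem density_measurable {t : SPN n X} (ht : t.WF ν) : Measurable t.density := by
  induction t with
  | leaf d emb g =>
    exact ht.2.1.comp (measurable_pi_lambda _ fun j => measurable_pi_apply _)
  | prod m c ih =>
    exact Finset.measurable_prod Finset.univ fun i _ => ih i (ht.2.1 i)
  | sum m w c ih =>
    exact Finset.measurable_sum Finset.univ fun i _ => (measurable_const.mul (ih i (ht.2.1 i)))

theorem sameStruct_scope {t t' : SPN n X} (h : SPN.SameStruct t t') : t.scope = t'.scope := by
  induction h with
  | leaf d emb g g' => rfl
  | prod m c c' h ih => simp only [SPN.scope]; exact Finset.biUnion_congr rfl fun i _ => ih i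
  | sum m w w' c c' h ih => simp only [SPN.scope]; exact Finset.biUnion_congr rfl fun i _ => ih i

theorem sameStruct_numLeaves {t t' : SPN n X} (h : SPN.SameStruct t t') :
    t.numLeaves = t'.numLeaves := by
  induction h with
  | leaf d emb g g' => rfl
  | prod m c c' h ih => simp only [SPN.numLeaves]; exact Finset.sum_congr rfl fun i _ => ih i
  | sum m w w' c c' h ih => simp only [SPN.numLeaves]; exact Finset.sum_congr rfl fun i _ => ih i

theorem sameStruct_numWeights {t t' : SPN n X} (h : SPN.SameStruct t t') :
    t.numWeights = t'.numWeights := by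
  induction h with
  | leaf d emb g g' => rfl
  | prod m c c' h ih => simp only [SPN.numWeights]; exact Finset.sum_congr rfl fun i _ => ih i
  | sum m w w' c c' h ih =>
    simp only [SPN.numWeights]
    exact congrArg (m + ·) (Finset.sum_congr rfl fun i _ => ih i)

theorem length_leaves (t : SPN n X) : t.leaves.length = t.numLeaves := by
  induction t with
  | leaf d emb g => rfl
  | prod m c ih =>
    simp [SPN.leaves, SPN.numLeaves, List.length_flatten, List.map_ofFn, Function.comp_def, ih,
      List.sum_ofFn]
  | sum m w c ih =>
    simp [SPN.leaves, SPN.numLeaves, List.length_flatten, List.map_ofFn, Function.comp_def, ih,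
      List.sum_ofFn]

theorem length_pathWeights (t : SPN n X) : t.pathWeights.length = t.numLeaves := by
  induction t with
  | leaf d emb g => rfl
  | prod m c ih =>
    simp [SPN.pathWeights, SPN.numLeaves, List.length_flatten, List.map_ofFn, Function.comp_def,
      ih, List.sum_ofFn]
  | sum m w c ih =>
    simp [SPN.pathWeights, SPN.numLeaves, List.length_flatten, List.map_ofFn, Function.comp_def,
      ih, List.sum_ofFn]

theorem length_weightsList (t : SPN n X) : t.weightsList.length = t.numWeights := by
  induction t with
  | leaf d emb g => rfl
  | prod m c ih =>
    simp [SPN.weightsList, SPN.numWeights, List.length_flatten, List.map_ofFn, Function.comp_def,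
      ih, List.sum_ofFn]
  | sum m w c ih =>
    simp [SPN.weightsList, SPN.numWeights, List.length_flatten, List.map_ofFn, Function.comp_def,
      ih, List.sum_ofFn]

theorem pathWeights_nonneg {t : SPN n X} (ht : t.WF ν) : ∀ r ∈ t.pathWeights, 0 ≤ r := by
  induction t with
  | leaf d emb g => intro r hr; simp only [SPN.pathWeights, List.mem_singleton] at hr; simp [hr]
  | prod m c ih =>
    intro r hr
    simp only [SPN.pathWeights, List.mem_flatten, List.mem_ofFn] at hr
    obtain ⟨l, ⟨i, rfl⟩, hrl⟩ := hr
    exact ih i (ht.2.1 i) r hrl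
  | sum m w c ih =>
    intro r hr
    simp only [SPN.pathWeights, List.mem_flatten, List.mem_ofFn] at hr
    obtain ⟨l, ⟨i, rfl⟩, hrl⟩ := hr
    simp only [List.mem_map] at hrl
    obtain ⟨s, hs, rfl⟩ := hrl
    exact mul_nonneg (ht.2.2.2.1 i) (ih i (ht.2.1 i) s hs)

/-- well-formedness of an individual leaf datum -/
def LeafWF (L : SPN.LeafT n X) : Prop :=
  (∀ y, 0 ≤ L.2.2 y) ∧ Measurable L.2.2 ∧
    ∫ y, L.2.2 y ∂(Measure.pi fun _ : Fin L.1 => ν) = 1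

theorem leaves_WF {t : SPN n X} (ht : t.WF ν) : ∀ L ∈ t.leaves, LeafWF ν L := by
  induction t with
  | leaf d emb g =>
    intro L hL
    simp only [SPN.leaves, List.mem_singleton] at hL
    obtain rfl := List.mem_singleton.mp hL
    exact ⟨ht.1, ht.2.1, ht.2.2⟩
  | prod m c ih =>
    intro L hL
    simp only [SPN.leaves, List.mem_flatten, List.mem_ofFn] at hL
    obtain ⟨l, ⟨i, rfl⟩, hLl⟩ := hL
    exact ih i (ht.2.1 i) L hLl
  | sum m w c ih =>
    intro L hL
    simp only [SPN.leaves, List.mem_flatten, List.mem_ofFn] at hL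
    obtain ⟨l, ⟨i, rfl⟩, hLl⟩ := hL
    exact ih i (ht.2.1 i) L hLl

theorem sameStruct_leaves_fst {t t' : SPN n X} (h : SPN.SameStruct t t') :
    t'.leaves.map Sigma.fst = t.leaves.map Sigma.fst := by
  induction h with
  | leaf d emb g g' => rfl
  | prod m c c' h ih =>
    simp only [SPN.leaves, List.map_flatten, List.map_ofFn]
    exact (List.map_flatten).trans ((congrArg List.flatten (List.map_ofFn)).trans
      ((congrArg List.flatten (congrArg List.ofFn (funext fun i => ih i))).trans
        (List.map_flatten.trans (congrArg List.flatten List.map_ofFn)).symm))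
  | sum m w w' c c' h ih =>
    simp only [SPN.leaves, List.map_flatten, List.map_ofFn]
    exact (List.map_flatten).trans ((congrArg List.flatten (List.map_ofFn)).trans
      ((congrArg List.flatten (congrArg List.ofFn (funext fun i => ih i))).trans
        (List.map_flatten.trans (congrArg List.flatten List.map_ofFn)).symm))

section Marginal

open Function

/-! ### Marginal helper lemmas -/

theorem lmarginal_leaf {d : ℕ} (emb : Fin d ↪ Fin n) {φ : (Fin d → X) → ℝ≥0∞}
    (hφ : Measurable φ) (x : Fin n → X) :
    (∫⋯∫⁻_(Finset.univ.map emb), (fun y => φ fun j => y (emb j)) ∂(fun _ : Fin n => ν)) x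
      = ∫⁻ z, φ z ∂(Measure.pi fun _ : Fin d => ν) := by
  have h1 : (Finset.univ.map emb) = Finset.image emb Finset.univ := by
    rw [Finset.map_eq_image]
  rw [h1]
  have h2 := MeasureTheory.lmarginal_image (X := fun _ : Fin n => X)
    (μ := fun _ : Fin n => ν) (e := emb) emb.injective Finset.univ hφ x
  have h3 : (φ ∘ (· ∘' ⇑emb)) = (fun y : Fin n → X => φ fun j => y (emb j)) := rfl
  rw [h3] at h2
  rw [h2]
  exact (MeasureTheory.lintegral_eq_lmarginal_univ _).symm

theorem lmarginal_mul_of_dependsOn {s t : Finset (Fin n)} (hst : Disjoint s t)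
    {φ ψ : (Fin n → X) → ℝ≥0∞}
    (hφ : ∀ x y, (∀ i ∈ s, x i = y i) → φ x = φ y) (hψ : Measurable ψ) (x : Fin n → X) :
    (∫⋯∫⁻_t, (fun y => φ y * ψ y) ∂(fun _ : Fin n => ν)) x
      = φ x * (∫⋯∫⁻_t, ψ ∂(fun _ : Fin n => ν)) x := by
  simp only [MeasureTheory.lmarginal]
  have h4 : ∀ y, φ (Function.updateFinset x t y) = φ x := fun y =>
    hφ _ _ fun i hi => by simp [Function.updateFinset, Finset.disjoint_left.mp hst hi]
  calc ∫⁻ y, φ (Function.updateFinset x t y) * ψ (Function.updateFinset x t y)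
        ∂(Measure.pi fun _ : { x // x ∈ t } => ν)
      = ∫⁻ y, φ x * ψ (Function.updateFinset x t y)
        ∂(Measure.pi fun _ : { x // x ∈ t } => ν) := by
        refine MeasureTheory.lintegral_congr fun y => ?_
        rw [h4]
    _ = φ x * ∫⁻ y, ψ (Function.updateFinset x t y)
        ∂(Measure.pi fun _ : { x // x ∈ t } => ν) :=
        MeasureTheory.lintegral_const_mul _ (hψ.comp measurable_updateFinset)

theorem lmarginal_dependsOn_const {s : Finset (Fin n)} {φ : (Fin n → X) → ℝ≥0∞}
    (hφ : ∀ x y, (∀ i ∈ s, x i = y i) → φ x = φ y) (x z : Fin n → X) :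
    (∫⋯∫⁻_s, φ ∂(fun _ : Fin n => ν)) x = (∫⋯∫⁻_s, φ ∂(fun _ : Fin n => ν)) z := by
  simp only [MeasureTheory.lmarginal]
  congr 1; funext y
  exact hφ _ _ fun i hi => by simp [Function.updateFinset, hi]

theorem lmarginal_fsum {ι : Type*} (u : Finset ι) {F : ι → (Fin n → X) → ℝ≥0∞}
    (hF : ∀ i ∈ u, Measurable (F i)) (s : Finset (Fin n)) (x : Fin n → X) :
    (∫⋯∫⁻_s, (fun y => ∑ i ∈ u, F i y) ∂(fun _ : Fin n => ν)) x
      = ∑ i ∈ u, (∫⋯∫⁻_s, F i ∂(fun _ : Fin n => ν)) x := by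
  simp only [MeasureTheory.lmarginal]
  exact MeasureTheory.lintegral_finset_sum' u
    fun i hi => ((hF i hi).comp measurable_updateFinset).aemeasurable

theorem lmarginal_cmul {cst : ℝ≥0∞} {ψ : (Fin n → X) → ℝ≥0∞} (hψ : Measurable ψ)
    (s : Finset (Fin n)) (x : Fin n → X) :
    (∫⋯∫⁻_s, (fun y => cst * ψ y) ∂(fun _ : Fin n => ν)) x
      = cst * (∫⋯∫⁻_s, ψ ∂(fun _ : Fin n => ν)) x := by
  simp only [MeasureTheory.lmarginal]
  exact MeasureTheory.lintegral_const_mul _ (hψ.comp measurable_updateFinset)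

theorem lmarginal_add {φ ψ : (Fin n → X) → ℝ≥0∞} (hφ : Measurable φ)
    (s : Finset (Fin n)) (x : Fin n → X) :
    (∫⋯∫⁻_s, (fun y => φ y + ψ y) ∂(fun _ : Fin n => ν)) x
      = (∫⋯∫⁻_s, φ ∂(fun _ : Fin n => ν)) x + (∫⋯∫⁻_s, ψ ∂(fun _ : Fin n => ν)) x := by
  simp only [MeasureTheory.lmarginal]
  exact MeasureTheory.lintegral_add_left (hφ.comp measurable_updateFinset) _

/-- integral over the scope of a WF SPN of its density equals 1 -/
theorem mass {t : SPN n X} (ht : t.WF ν) :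
    ∀ x, (∫⋯∫⁻_t.scope, (fun y => ENNReal.ofReal (t.density y)) ∂(fun _ : Fin n => ν)) x = 1 := by
  induction t with
  | leaf d emb g =>
    intro x
    obtain ⟨hg0, hgm, hgi⟩ := ht
    have hInt : Integrable g (Measure.pi fun _ : Fin d => ν) := by
      by_contra h
      rw [MeasureTheory.integral_undef h] at hgi
      norm_num at hgi
    have := lmarginal_leaf ν emb (φ := fun z => ENNReal.ofReal (g z))
      (ENNReal.measurable_ofReal.comp hgm) x
    simp only [SPN.scope, SPN.density]
    rw [this, ← MeasureTheory.ofReal_integral_eq_lintegral_ofReal hInt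
      (Filter.Eventually.of_forall hg0), hgi, ENNReal.ofReal_one]
  | prod m c ih =>
    obtain ⟨hm, hwf, hdisj⟩ := ht
    have hmeas : ∀ u : Finset (Fin m),
        Measurable fun y => ENNReal.ofReal (∏ i ∈ u, (c i).density y) :=
      fun u => ENNReal.measurable_ofReal.comp
        (Finset.measurable_prod u fun i _ => density_measurable ν (hwf i))
    have key : ∀ u : Finset (Fin m), ∀ x,
        (∫⋯∫⁻_(u.biUnion fun i => (c i).scope),
          (fun y => ENNReal.ofReal (∏ i ∈ u, (c i).density y)) ∂(fun _ : Fin n => ν)) x = 1 := by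
      intro u
      induction u using Finset.induction with
      | empty => intro x; simp
      | @insert a u ha ihu =>
        intro x
        have hdab : Disjoint ((c a).scope) (u.biUnion fun i => (c i).scope) :=
          Finset.disjoint_biUnion_right _ _ _ |>.mpr fun i hi =>
            hdisj a i (fun hai => ha (hai ▸ hi))
        have hfun : (fun y => ENNReal.ofReal (∏ i ∈ insert a u, (c i).density y))
            = fun y => ENNReal.ofReal ((c a).density y)
                * ENNReal.ofReal (∏ i ∈ u, (c i).density y) := by
          funext y
          rw [Finset.prod_insert ha, ENNReal.ofReal_mul (density_nonneg ν (hwf a) y)]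
        have hma : Measurable fun y : Fin n → X => ENNReal.ofReal ((c a).density y)
            * ENNReal.ofReal (∏ i ∈ u, (c i).density y) :=
          (ENNReal.measurable_ofReal.comp (density_measurable ν (hwf a))).mul (hmeas u)
        rw [Finset.biUnion_insert, hfun,
          MeasureTheory.lmarginal_union (fun _ : Fin n => ν) _ hma hdab]
        have hinner : ∀ z, (∫⋯∫⁻_(u.biUnion fun i => (c i).scope),
            (fun y => ENNReal.ofReal ((c a).density y)
              * ENNReal.ofReal (∏ i ∈ u, (c i).density y)) ∂(fun _ : Fin n => ν)) z
            = ENNReal.ofReal ((c a).density z) := by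
          intro z
          rw [lmarginal_mul_of_dependsOn ν hdab
            (fun x y h => by rw [density_dependsOn (c a) x y h]) (hmeas u) z, ihu z, mul_one]
        have hfn : (∫⋯∫⁻_(u.biUnion fun i => (c i).scope),
            (fun y => ENNReal.ofReal ((c a).density y)
              * ENNReal.ofReal (∏ i ∈ u, (c i).density y)) ∂(fun _ : Fin n => ν))
            = fun z => ENNReal.ofReal ((c a).density z) := funext hinner
        rw [hfn]
        exact ih a (hwf a) x
    intro x
    simpa only [SPN.scope, SPN.density] using key Finset.univ x
  | sum m w c ih =>
    obtain ⟨hm, hwf, hsc, hw0, hw1⟩ := ht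
    intro x
    have hscope : ∀ i, (Finset.univ.biUnion fun i => (c i).scope) = (c i).scope := by
      intro i
      apply Finset.ext; intro j
      simp only [Finset.mem_biUnion, Finset.mem_univ, true_and]
      constructor
      · rintro ⟨i', hj⟩; rwa [hsc i' i] at hj
      · intro hj; exact ⟨i, hj⟩
    have hfun : (fun y => ENNReal.ofReal ((SPN.sum m w c).density y))
        = fun y => ∑ i, ENNReal.ofReal (w i) * ENNReal.ofReal ((c i).density y) := by
      funext y
      simp only [SPN.density]
      rw [ENNReal.ofReal_sum_of_nonneg
        fun i _ => mul_nonneg (hw0 i) (density_nonneg ν (hwf i) y)]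
      exact Finset.sum_congr rfl fun i _ =>
        ENNReal.ofReal_mul (hw0 i)
    simp only [SPN.scope] at hfun ⊢
    rw [hfun]
    have hFm : ∀ i ∈ Finset.univ (α := Fin m),
        Measurable fun y : Fin n → X =>
          ENNReal.ofReal (w i) * ENNReal.ofReal ((c i).density y) := fun i _ =>
      measurable_const.mul (ENNReal.measurable_ofReal.comp (density_measurable ν (hwf i)))
    rw [lmarginal_fsum ν Finset.univ hFm _ x]
    have : ∀ i ∈ Finset.univ (α := Fin m),
        (∫⋯∫⁻_(Finset.univ.biUnion fun i => (c i).scope),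
          (fun y => ENNReal.ofReal (w i) * ENNReal.ofReal ((c i).density y))
            ∂(fun _ : Fin n => ν)) x = ENNReal.ofReal (w i) := by
      intro i _
      have hci : Measurable fun y : Fin n → X => ENNReal.ofReal ((c i).density y) :=
        ENNReal.measurable_ofReal.comp (density_measurable ν (hwf i))
      rw [lmarginal_cmul ν hci _ x, hscope i, ih i (hwf i) x, mul_one]
    rw [Finset.sum_congr rfl this, ← ENNReal.ofReal_sum_of_nonneg fun i _ => hw0 i, hw1,
      ENNReal.ofReal_one]

end Marginal

section Lists

/-! ### List lemmas -/

theorem zipWith_ofFn' {α β γ : Type*} {m : ℕ} (f : α → β → γ) (F : Fin m → α) (G : Fin m → β) :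
    List.zipWith f (List.ofFn F) (List.ofFn G) = List.ofFn fun i => f (F i) (G i) := by
  apply List.ext_getElem (by simp)
  intro i h1 h2
  simp

theorem zip_flatten_ofFn {α β : Type*} {m : ℕ} (F : Fin m → List α) (G : Fin m → List β)
    (hl : ∀ i, (F i).length = (G i).length) :
    (List.ofFn F).flatten.zip (List.ofFn G).flatten
      = (List.ofFn fun i => (F i).zip (G i)).flatten := by
  induction m with
  | zero => simp
  | succ m ih =>
    rw [List.ofFn_succ, List.ofFn_succ, List.ofFn_succ (f := fun i => (F i).zip (G i)),
      List.flatten_cons, List.flatten_cons, List.flatten_cons, List.zip_append (hl 0),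
      ih (fun i => F i.succ) (fun i => G i.succ) (fun i => hl i.succ)]

theorem sum_map_zip_flatten_ofFn {α β γ : Type*} [AddCommMonoid γ] (f : α × β → γ) {m : ℕ}
    (F : Fin m → List α) (G : Fin m → List β) (hl : ∀ i, (F i).length = (G i).length) :
    (((List.ofFn F).flatten.zip (List.ofFn G).flatten).map f).sum
      = ∑ i, (((F i).zip (G i)).map f).sum := by
  rw [zip_flatten_ofFn F G hl, List.map_flatten, List.sum_flatten, List.map_ofFn, List.map_ofFn,
    List.sum_ofFn]
  rfl

theorem sum_zip_fin {α β γ : Type*} [AddCommMonoid γ] (f : α × β → γ) (l : List α) (l' : List β)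
    (hl : l.length = l'.length) :
    ((l.zip l').map f).sum = ∑ i : Fin l.length, f (l.get i, l'.get ⟨i, hl ▸ i.2⟩) := by
  have h1 : ((l.zip l').map f).length = l.length := by simp [hl]
  conv_lhs => rw [← List.ofFn_get ((l.zip l').map f)]
  rw [List.sum_ofFn]
  rw [← Fin.sum_congr' _ h1]
  apply Finset.sum_congr rfl
  intro i _
  simp [List.get_eq_getElem, List.getElem_map, List.getElem_zip, Fin.coe_cast]

/-! ### The leaf/weight discrepancy quantities -/

noncomputable def leafE (L L' : SPN.LeafT n X) : ℝ≥0∞ :=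
  if h : L'.1 = L.1 then
    ∫⁻ y, ENNReal.ofReal |L.2.2 y - L'.2.2 fun j => y (Fin.cast h j)|
      ∂(Measure.pi fun _ : Fin L.1 => ν)
  else 0

noncomputable def SA (t t' : SPN n X) : ℝ≥0∞ :=
  ((t.pathWeights.zip (t.leaves.zip t'.leaves)).map
    fun p => ENNReal.ofReal p.1 * leafE ν p.2.1 p.2.2).sum

noncomputable def SB (t t' : SPN n X) : ℝ≥0∞ :=
  ((t.weightsList.zip t'.weightsList).map fun p => ENNReal.ofReal |p.2 - p.1|).sum

theorem SA_leaf (d : ℕ) (emb : Fin d ↪ Fin n) (g g' : (Fin d → X) → ℝ) :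
    SA ν (SPN.leaf d emb g) (SPN.leaf d emb g')
      = leafE ν ⟨d, emb, g⟩ ⟨d, emb, g'⟩ := by
  simp [SA, SPN.pathWeights, SPN.leaves, List.zip, List.zipWith]

theorem SB_leaf (d : ℕ) (emb : Fin d ↪ Fin n) (g g' : (Fin d → X) → ℝ) :
    SB (SPN.leaf d emb g) (SPN.leaf d emb g') = 0 := by
  simp [SB, SPN.weightsList, List.zip]

theorem SA_prod {m : ℕ} (c c' : Fin m → SPN n X)
    (hlen : ∀ i, (c' i).numLeaves = (c i).numLeaves) :
    SA ν (SPN.prod m c) (SPN.prod m c') = ∑ i, SA ν (c i) (c' i) := by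
  simp only [SA, SPN.pathWeights, SPN.leaves]
  rw [zip_flatten_ofFn (fun i => (c i).leaves) (fun i => (c' i).leaves)
    (fun i => by rw [length_leaves, length_leaves, hlen i]),
    sum_map_zip_flatten_ofFn _ (fun i => (c i).pathWeights)
      (fun i => (c i).leaves.zip (c' i).leaves)
      (fun i => by
        rw [length_pathWeights, List.length_zip, length_leaves, length_leaves, hlen i,
          min_self])]

theorem SB_prod {m : ℕ} (c c' : Fin m → SPN n X)
    (hlen : ∀ i, (c' i).numWeights = (c i).numWeights) :
    SB (SPN.prod m c) (SPN.prod m c') = ∑ i, SB (c i) (c' i) := by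
  simp only [SB, SPN.weightsList]
  rw [sum_map_zip_flatten_ofFn _ (fun i => (c i).weightsList)
    (fun i => (c' i).weightsList)
    (fun i => by rw [length_weightsList, length_weightsList, hlen i])]

theorem SA_sum {m : ℕ} (w w' : Fin m → ℝ) (c c' : Fin m → SPN n X)
    (hlen : ∀ i, (c' i).numLeaves = (c i).numLeaves)
    (hw0 : ∀ i, 0 ≤ w i)
    (hpw : ∀ i, ∀ r ∈ (c i).pathWeights, 0 ≤ r) :
    SA ν (SPN.sum m w c) (SPN.sum m w' c')
      = ∑ i, ENNReal.ofReal (w i) * SA ν (c i) (c' i) := by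
  simp only [SA, SPN.pathWeights, SPN.leaves]
  rw [zip_flatten_ofFn (fun i => (c i).leaves) (fun i => (c' i).leaves)
    (fun i => by rw [length_leaves, length_leaves, hlen i]),
    sum_map_zip_flatten_ofFn _ (fun i => (c i).pathWeights.map fun r => w i * r)
      (fun i => (c i).leaves.zip (c' i).leaves)
      (fun i => by
        rw [List.length_map, length_pathWeights, List.length_zip, length_leaves, length_leaves,
          hlen i, min_self])]
  apply Finset.sum_congr rfl
  intro i _
  rw [List.zip_map_left, List.map_map]
  have : ∀ p ∈ (c i).pathWeights.zip ((c i).leaves.zip ((c' i).leaves)),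
      ((fun p : ℝ × (SPN.LeafT n X × SPN.LeafT n X) =>
          ENNReal.ofReal p.1 * leafE ν p.2.1 p.2.2) ∘ Prod.map (fun r => w i * r) id) p
        = ENNReal.ofReal (w i) * (ENNReal.ofReal p.1 * leafE ν p.2.1 p.2.2) := by
    intro p hp
    have hp1 : 0 ≤ p.1 := hpw i p.1 (List.of_mem_zip hp).1
    simp only [Function.comp_apply, Prod.map_fst, Prod.map_snd, Prod.map_apply, id_eq]
    rw [ENNReal.ofReal_mul (hw0 i), mul_assoc]
  rw [List.map_congr_left this, List.sum_map_mul_left]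

theorem SB_sum {m : ℕ} (w w' : Fin m → ℝ) (c c' : Fin m → SPN n X)
    (hlen : ∀ i, (c' i).numWeights = (c i).numWeights) :
    SB (SPN.sum m w c) (SPN.sum m w' c')
      = (∑ i, ENNReal.ofReal |w' i - w i|) + ∑ i, SB (c i) (c' i) := by
  simp only [SB, SPN.weightsList]
  rw [List.zip_append (by simp), List.map_append, List.sum_append]
  congr 1
  · rw [show (List.ofFn fun i => w i).zip (List.ofFn fun i => w' i)
        = List.ofFn fun i => (w i, w' i) from zipWith_ofFn' Prod.mk w w',
      List.map_ofFn, List.sum_ofFn]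
    rfl
  · rw [sum_map_zip_flatten_ofFn _ (fun i => (c i).weightsList)
      (fun i => (c' i).weightsList)
      (fun i => by rw [length_weightsList, length_weightsList, hlen i])]

end Lists

section Main

/-! ### Product-of-children mass and the main inductive bound -/

theorem lmarginal_mulc {cst : ℝ≥0∞} {ψ : (Fin n → X) → ℝ≥0∞} (hψ : Measurable ψ)
    (s : Finset (Fin n)) (x : Fin n → X) :
    (∫⋯∫⁻_s, (fun y => ψ y * cst) ∂(fun _ : Fin n => ν)) x
      = (∫⋯∫⁻_s, ψ ∂(fun _ : Fin n => ν)) x * cst := by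
  simp only [MeasureTheory.lmarginal]
  exact MeasureTheory.lintegral_mul_const _ (hψ.comp measurable_updateFinset)

theorem mass_prod {m : ℕ} (c : Fin m → SPN n X) (hwf : ∀ i, (c i).WF ν)
    (hdisj : ∀ i j, i ≠ j → Disjoint ((c i).scope) ((c j).scope)) :
    ∀ u : Finset (Fin m), ∀ x,
      (∫⋯∫⁻_(u.biUnion fun i => (c i).scope),
        (fun y => ENNReal.ofReal (∏ i ∈ u, (c i).density y)) ∂(fun _ : Fin n => ν)) x = 1 := by
  have hmeas : ∀ u : Finset (Fin m),
      Measurable fun y => ENNReal.ofReal (∏ i ∈ u, (c i).density y) :=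
    fun u => ENNReal.measurable_ofReal.comp
      (Finset.measurable_prod u fun i _ => density_measurable ν (hwf i))
  intro u
  induction u using Finset.induction with
  | empty => intro x; simp
  | @insert a u ha ihu =>
    intro x
    have hdab : Disjoint ((c a).scope) (u.biUnion fun i => (c i).scope) :=
      Finset.disjoint_biUnion_right _ _ _ |>.mpr fun i hi =>
        hdisj a i (fun hai => ha (hai ▸ hi))
    have hfun : (fun y => ENNReal.ofReal (∏ i ∈ insert a u, (c i).density y))
        = fun y => ENNReal.ofReal ((c a).density y)
            * ENNReal.ofReal (∏ i ∈ u, (c i).density y) := by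
      funext y
      rw [Finset.prod_insert ha, ENNReal.ofReal_mul (density_nonneg ν (hwf a) y)]
    have hma : Measurable fun y : Fin n → X => ENNReal.ofReal ((c a).density y)
        * ENNReal.ofReal (∏ i ∈ u, (c i).density y) :=
      (ENNReal.measurable_ofReal.comp (density_measurable ν (hwf a))).mul (hmeas u)
    rw [Finset.biUnion_insert, hfun,
      MeasureTheory.lmarginal_union (fun _ : Fin n => ν) _ hma hdab]
    have hinner : ∀ z, (∫⋯∫⁻_(u.biUnion fun i => (c i).scope),
        (fun y => ENNReal.ofReal ((c a).density y)
          * ENNReal.ofReal (∏ i ∈ u, (c i).density y)) ∂(fun _ : Fin n => ν)) z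
        = ENNReal.ofReal ((c a).density z) := by
      intro z
      rw [lmarginal_mul_of_dependsOn ν hdab
        (fun x y h => by rw [density_dependsOn (c a) x y h]) (hmeas u) z, ihu z, mul_one]
    have hfn : (∫⋯∫⁻_(u.biUnion fun i => (c i).scope),
        (fun y => ENNReal.ofReal ((c a).density y)
          * ENNReal.ofReal (∏ i ∈ u, (c i).density y)) ∂(fun _ : Fin n => ν))
        = fun z => ENNReal.ofReal ((c a).density z) := funext hinner
    rw [hfn]
    exact mass ν (hwf a) x

theorem main {t t' : SPN n X} (hstr : SPN.SameStruct t t') :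
    t.WF ν → t'.WF ν → ∀ x,
      (∫⋯∫⁻_t.scope, (fun y => ENNReal.ofReal |t.density y - t'.density y|)
        ∂(fun _ : Fin n => ν)) x ≤ SA ν t t' + SB t t' := by
  induction hstr with
  | leaf d emb g g' =>
    intro ht ht' x
    obtain ⟨hg0, hgm, hgi⟩ := ht
    obtain ⟨hg'0, hg'm, hg'i⟩ := ht'
    rw [SA_leaf, SB_leaf, add_zero]
    have hm : Measurable fun z : Fin d → X => ENNReal.ofReal |g z - g' z| :=
      ENNReal.measurable_ofReal.comp (hgm.sub hg'm).abs
    have h1 := lmarginal_leaf ν emb (φ := fun z => ENNReal.ofReal |g z - g' z|) hm x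
    refine le_of_eq ?_
    show (∫⋯∫⁻_(Finset.univ.map emb),
      (fun y => (fun z : Fin d → X => ENNReal.ofReal |g z - g' z|) fun j => y (emb j))
        ∂(fun _ : Fin n => ν)) x = _
    rw [h1]
    rw [show leafE ν (⟨d, emb, g⟩ : SPN.LeafT n X) ⟨d, emb, g'⟩
      = ∫⁻ y, ENNReal.ofReal |g y - g' fun j => y (Fin.cast rfl j)|
          ∂(Measure.pi fun _ : Fin d => ν) from dif_pos rfl]
    refine MeasureTheory.lintegral_congr fun y => ?_
    have : (fun j => y (Fin.cast rfl j)) = y := funext fun j => congrArg y (Fin.ext rfl)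
    rw [this]
  | prod m c c' hc ih =>
    intro ht ht' x
    obtain ⟨hm0, hwf, hdisj⟩ := ht
    obtain ⟨_, hwf', hdisj'⟩ := ht'
    rw [SA_prod ν c c' fun i => (sameStruct_numLeaves (hc i)).symm,
      SB_prod c c' fun i => (sameStruct_numWeights (hc i)).symm]
    have hBeq : ∀ u : Finset (Fin m),
        (u.biUnion fun i => (c' i).scope) = u.biUnion fun i => (c i).scope :=
      fun u => Finset.biUnion_congr rfl fun i _ => (sameStruct_scope (hc i)).symm
    have hmeasd : ∀ u : Finset (Fin m),
        Measurable fun y => ENNReal.ofReal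
          |(∏ i ∈ u, (c i).density y) - ∏ i ∈ u, (c' i).density y| :=
      fun u => ENNReal.measurable_ofReal.comp
        ((Finset.measurable_prod u fun i _ => density_measurable ν (hwf i)).sub
          (Finset.measurable_prod u fun i _ => density_measurable ν (hwf' i))).abs
    have key : ∀ u : Finset (Fin m), ∀ z,
        (∫⋯∫⁻_(u.biUnion fun i => (c i).scope),
          (fun y => ENNReal.ofReal
            |(∏ i ∈ u, (c i).density y) - ∏ i ∈ u, (c' i).density y|)
          ∂(fun _ : Fin n => ν)) z
        ≤ ∑ i ∈ u, (SA ν (c i) (c' i) + SB (c i) (c' i)) := by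
      intro u
      induction u using Finset.induction with
      | empty => intro z; simp
      | @insert a u ha ihu =>
        intro z
        have hdab : Disjoint ((c a).scope) (u.biUnion fun i => (c i).scope) :=
          Finset.disjoint_biUnion_right _ _ _ |>.mpr fun i hi =>
            hdisj a i (fun hai => ha (hai ▸ hi))
        -- pointwise bound
        have hb : (fun y => ENNReal.ofReal
            |(∏ i ∈ insert a u, (c i).density y) - ∏ i ∈ insert a u, (c' i).density y|)
            ≤ fun y => ENNReal.ofReal ((c a).density y)
                * ENNReal.ofReal |(∏ i ∈ u, (c i).density y) - ∏ i ∈ u, (c' i).density y|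
              + ENNReal.ofReal |(c a).density y - (c' a).density y|
                * ENNReal.ofReal (∏ i ∈ u, (c' i).density y) := by
          intro y
          dsimp only
          rw [Finset.prod_insert ha, Finset.prod_insert ha,
            ← ENNReal.ofReal_mul (density_nonneg ν (hwf a) y),
            ← ENNReal.ofReal_mul (abs_nonneg _),
            ← ENNReal.ofReal_add
              (mul_nonneg (density_nonneg ν (hwf a) y) (abs_nonneg _))
              (mul_nonneg (abs_nonneg _)
                (Finset.prod_nonneg fun i _ => density_nonneg ν (hwf' i) y))]
          apply ENNReal.ofReal_le_ofReal
          set A := (c a).density y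
          set A' := (c' a).density y
          set P := ∏ i ∈ u, (c i).density y
          set P' := ∏ i ∈ u, (c' i).density y
          have h1 : A * P - A' * P' = A * (P - P') + (A - A') * P' := by ring
          calc |A * P - A' * P'| = |A * (P - P') + (A - A') * P'| := by rw [h1]
            _ ≤ |A * (P - P')| + |(A - A') * P'| := abs_add_le _ _
            _ = A * |P - P'| + |A - A'| * P' := by
                rw [abs_mul, abs_mul, abs_of_nonneg (density_nonneg ν (hwf a) y),
                  abs_of_nonneg (Finset.prod_nonneg fun i _ => density_nonneg ν (hwf' i) y)]
        refine le_trans (MeasureTheory.lmarginal_mono hb z) ?_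
        have hmf1 : Measurable fun y : Fin n → X => ENNReal.ofReal ((c a).density y)
            * ENNReal.ofReal |(∏ i ∈ u, (c i).density y) - ∏ i ∈ u, (c' i).density y| :=
          (ENNReal.measurable_ofReal.comp (density_measurable ν (hwf a))).mul (hmeasd u)
        have hmf2 : Measurable fun y : Fin n → X =>
            ENNReal.ofReal |(c a).density y - (c' a).density y|
              * ENNReal.ofReal (∏ i ∈ u, (c' i).density y) :=
          (ENNReal.measurable_ofReal.comp
            ((density_measurable ν (hwf a)).sub (density_measurable ν (hwf' a))).abs).mul
            (ENNReal.measurable_ofReal.comp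
              (Finset.measurable_prod u fun i _ => density_measurable ν (hwf' i)))
        have hmtot : Measurable fun y : Fin n → X =>
            ENNReal.ofReal ((c a).density y)
                * ENNReal.ofReal |(∏ i ∈ u, (c i).density y) - ∏ i ∈ u, (c' i).density y|
              + ENNReal.ofReal |(c a).density y - (c' a).density y|
                * ENNReal.ofReal (∏ i ∈ u, (c' i).density y) := hmf1.add hmf2
        rw [Finset.biUnion_insert,
          MeasureTheory.lmarginal_union (fun _ : Fin n => ν) _ hmtot hdab]
        -- inner integral over the biUnion of u
        have hdepa : ∀ x y : Fin n → X, (∀ i ∈ (c a).scope, x i = y i) →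
            ENNReal.ofReal ((c a).density x) = ENNReal.ofReal ((c a).density y) :=
          fun x y h => by rw [density_dependsOn (c a) x y h]
        have hdepa2 : ∀ x y : Fin n → X, (∀ i ∈ (c a).scope, x i = y i) →
            ENNReal.ofReal |(c a).density x - (c' a).density x|
              = ENNReal.ofReal |(c a).density y - (c' a).density y| := by
          intro x y h
          rw [density_dependsOn (c a) x y h, density_dependsOn (c' a) x y
            (fun i hi => h i (by rwa [← sameStruct_scope (hc a)] at hi))]
        have hinner : ∀ z2, (∫⋯∫⁻_(u.biUnion fun i => (c i).scope),
            (fun y => ENNReal.ofReal ((c a).density y)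
                * ENNReal.ofReal |(∏ i ∈ u, (c i).density y) - ∏ i ∈ u, (c' i).density y|
              + ENNReal.ofReal |(c a).density y - (c' a).density y|
                * ENNReal.ofReal (∏ i ∈ u, (c' i).density y)) ∂(fun _ : Fin n => ν)) z2
            ≤ ENNReal.ofReal ((c a).density z2)
                * ∑ i ∈ u, (SA ν (c i) (c' i) + SB (c i) (c' i))
              + ENNReal.ofReal |(c a).density z2 - (c' a).density z2| := by
          intro z2
          have hmP' : Measurable fun y : Fin n → X =>
              ENNReal.ofReal (∏ i ∈ u, (c' i).density y) :=
            ENNReal.measurable_ofReal.comp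
              (Finset.measurable_prod u fun i _ => density_measurable ν (hwf' i))
          rw [lmarginal_add ν hmf1 _ z2,
            lmarginal_mul_of_dependsOn ν hdab hdepa (hmeasd u) z2,
            lmarginal_mul_of_dependsOn ν hdab hdepa2 hmP' z2]
          have hm1 : (∫⋯∫⁻_(u.biUnion fun i => (c i).scope),
              (fun y => ENNReal.ofReal (∏ i ∈ u, (c' i).density y))
                ∂(fun _ : Fin n => ν)) z2 = 1 := by
            rw [← hBeq u]
            exact mass_prod ν c' hwf' hdisj' u z2
          rw [hm1, mul_one]
          exact add_le_add_left
            (mul_le_mul_right (ihu z2) _) _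
        refine le_trans (MeasureTheory.lmarginal_mono (fun z2 => hinner z2) z) ?_
        -- outer integral over scope of (c a)
        have hmca : Measurable fun y : Fin n → X => ENNReal.ofReal ((c a).density y) :=
          ENNReal.measurable_ofReal.comp (density_measurable ν (hwf a))
        have hmda : Measurable fun y : Fin n → X =>
            ENNReal.ofReal |(c a).density y - (c' a).density y| :=
          ENNReal.measurable_ofReal.comp
            ((density_measurable ν (hwf a)).sub (density_measurable ν (hwf' a))).abs
        rw [show (fun z2 => ENNReal.ofReal ((c a).density z2)
              * ∑ i ∈ u, (SA ν (c i) (c' i) + SB (c i) (c' i))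
            + ENNReal.ofReal |(c a).density z2 - (c' a).density z2|)
          = fun z2 => (ENNReal.ofReal ((c a).density z2)
              * ∑ i ∈ u, (SA ν (c i) (c' i) + SB (c i) (c' i))
            + ENNReal.ofReal |(c a).density z2 - (c' a).density z2|) from rfl]
        rw [lmarginal_add ν (hmca.mul_const _) _ z,
          lmarginal_mulc ν hmca _ z, mass ν (hwf a) z, one_mul]
        rw [Finset.sum_insert ha, add_comm (SA ν (c a) (c' a) + SB (c a) (c' a))]
        exact add_le_add_right (ih a (hwf a) (hwf' a) z) _
    have h2 := key Finset.univ x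
    refine le_trans (le_of_eq ?_) (le_trans h2 (le_of_eq (Finset.sum_add_distrib)))
    rfl
  | sum m w w' c c' hc ih =>
    intro ht ht' x
    obtain ⟨hm0, hwf, hsceq, hw0, hw1⟩ := ht
    obtain ⟨_, hwf', hsceq', hw'0, hw'1⟩ := ht'
    rw [SA_sum ν w w' c c' (fun i => (sameStruct_numLeaves (hc i)).symm) hw0
        (fun i => pathWeights_nonneg ν (hwf i)),
      SB_sum w w' c c' fun i => (sameStruct_numWeights (hc i)).symm]
    have hscope : ∀ i, (Finset.univ.biUnion fun i => (c i).scope) = (c i).scope := by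
      intro i
      apply Finset.ext; intro j
      simp only [Finset.mem_biUnion, Finset.mem_univ, true_and]
      exact ⟨fun ⟨i', hj⟩ => (hsceq i' i) ▸ hj, fun hj => ⟨i, hj⟩⟩
    -- pointwise bound
    have hb : (fun y => ENNReal.ofReal
        |(∑ i, w i * (c i).density y) - ∑ i, w' i * (c' i).density y|)
        ≤ fun y => ∑ i, (ENNReal.ofReal (w i)
              * ENNReal.ofReal |(c i).density y - (c' i).density y|
            + ENNReal.ofReal |w' i - w i| * ENNReal.ofReal ((c' i).density y)) := by
      intro y
      have h1 : (∑ i, w i * (c i).density y) - ∑ i, w' i * (c' i).density y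
          = ∑ i, (w i * ((c i).density y - (c' i).density y)
              + (w i - w' i) * (c' i).density y) := by
        rw [← Finset.sum_sub_distrib]
        exact Finset.sum_congr rfl fun i _ => by ring
      calc ENNReal.ofReal |(∑ i, w i * (c i).density y) - ∑ i, w' i * (c' i).density y|
          ≤ ENNReal.ofReal (∑ i, (w i * |(c i).density y - (c' i).density y|
              + |w' i - w i| * (c' i).density y)) := by
            apply ENNReal.ofReal_le_ofReal
            rw [h1]
            refine le_trans (Finset.abs_sum_le_sum_abs _ _) (Finset.sum_le_sum fun i _ => ?_)
            refine le_trans (abs_add_le _ _) ?_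
            rw [abs_mul, abs_mul, abs_of_nonneg (hw0 i),
              abs_of_nonneg (density_nonneg ν (hwf' i) y), abs_sub_comm (w i)]
        _ = ∑ i, (ENNReal.ofReal (w i)
              * ENNReal.ofReal |(c i).density y - (c' i).density y|
            + ENNReal.ofReal |w' i - w i| * ENNReal.ofReal ((c' i).density y)) := by
            rw [ENNReal.ofReal_sum_of_nonneg fun i _ => add_nonneg
              (mul_nonneg (hw0 i) (abs_nonneg _))
              (mul_nonneg (abs_nonneg _) (density_nonneg ν (hwf' i) y))]
            refine Finset.sum_congr rfl fun i _ => ?_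
            rw [ENNReal.ofReal_add (mul_nonneg (hw0 i) (abs_nonneg _))
                (mul_nonneg (abs_nonneg _) (density_nonneg ν (hwf' i) y)),
              ENNReal.ofReal_mul (hw0 i), ENNReal.ofReal_mul (abs_nonneg _)]
    refine le_trans (MeasureTheory.lmarginal_mono hb x) ?_
    have hFm : ∀ i ∈ Finset.univ (α := Fin m), Measurable fun y : Fin n → X =>
        ENNReal.ofReal (w i) * ENNReal.ofReal |(c i).density y - (c' i).density y|
          + ENNReal.ofReal |w' i - w i| * ENNReal.ofReal ((c' i).density y) := fun i _ =>
      (measurable_const.mul (ENNReal.measurable_ofReal.comp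
        ((density_measurable ν (hwf i)).sub (density_measurable ν (hwf' i))).abs)).add
        (measurable_const.mul (ENNReal.measurable_ofReal.comp (density_measurable ν (hwf' i))))
    rw [lmarginal_fsum ν Finset.univ hFm _ x]
    have hterm : ∀ i ∈ Finset.univ (α := Fin m),
        (∫⋯∫⁻_(Finset.univ.biUnion fun i => (c i).scope),
          (fun y => ENNReal.ofReal (w i)
              * ENNReal.ofReal |(c i).density y - (c' i).density y|
            + ENNReal.ofReal |w' i - w i| * ENNReal.ofReal ((c' i).density y))
          ∂(fun _ : Fin n => ν)) x
        ≤ ENNReal.ofReal (w i) * (SA ν (c i) (c' i) + SB (c i) (c' i))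
          + ENNReal.ofReal |w' i - w i| := by
      intro i _
      have hdm : Measurable fun y : Fin n → X =>
          ENNReal.ofReal |(c i).density y - (c' i).density y| :=
        ENNReal.measurable_ofReal.comp
          ((density_measurable ν (hwf i)).sub (density_measurable ν (hwf' i))).abs
      have hdm' : Measurable fun y : Fin n → X => ENNReal.ofReal ((c' i).density y) :=
        ENNReal.measurable_ofReal.comp (density_measurable ν (hwf' i))
      rw [lmarginal_add ν (hdm.const_mul _) _ x,
        lmarginal_cmul ν hdm _ x, lmarginal_cmul ν hdm' _ x]
      have hmass' : (∫⋯∫⁻_(Finset.univ.biUnion fun i => (c i).scope),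
          (fun y => ENNReal.ofReal ((c' i).density y)) ∂(fun _ : Fin n => ν)) x = 1 := by
        rw [hscope i, sameStruct_scope (hc i)]
        exact mass ν (hwf' i) x
      rw [hmass', mul_one]
      refine add_le_add_left (mul_le_mul_right ?_ _) _
      rw [hscope i]
      exact ih i (hwf i) (hwf' i) x
    refine le_trans (le_of_eq ?_) (le_trans (Finset.sum_le_sum hterm) ?_)
    · rfl
    -- algebra
    rw [Finset.sum_add_distrib]
    have hw1le : ∀ i, ENNReal.ofReal (w i) ≤ 1 := by
      intro i
      rw [← ENNReal.ofReal_one]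
      apply ENNReal.ofReal_le_ofReal
      rw [← hw1]
      exact Finset.single_le_sum (fun j _ => hw0 j) (Finset.mem_univ i)
    calc (∑ i, ENNReal.ofReal (w i) * (SA ν (c i) (c' i) + SB (c i) (c' i)))
          + ∑ i, ENNReal.ofReal |w' i - w i|
        ≤ (∑ i, (ENNReal.ofReal (w i) * SA ν (c i) (c' i) + SB (c i) (c' i)))
          + ∑ i, ENNReal.ofReal |w' i - w i| := by
          refine add_le_add_left (Finset.sum_le_sum fun i _ => ?_) _
          rw [mul_add]
          exact add_le_add_right
            (le_trans (mul_le_mul_left (hw1le i) _) (by rw [one_mul])) _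
      _ = (∑ i, ENNReal.ofReal (w i) * SA ν (c i) (c' i))
          + ((∑ i, ENNReal.ofReal |w' i - w i|) + ∑ i, SB (c i) (c' i)) := by
          rw [Finset.sum_add_distrib]; ring
    
end Main

section LeafBounds

/-! ### Bounds on individual leaf discrepancies -/

theorem leafWF_integrable {L : SPN.LeafT n X} (hL : LeafWF ν L) :
    Integrable L.2.2 (Measure.pi fun _ : Fin L.1 => ν) := by
  by_contra h
  have h3 := hL.2.2
  rw [MeasureTheory.integral_undef h] at h3
  exact one_ne_zero h3.symm

theorem leafWF_lintegral {L : SPN.LeafT n X} (hL : LeafWF ν L) :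
    ∫⁻ y, ENNReal.ofReal (L.2.2 y) ∂(Measure.pi fun _ : Fin L.1 => ν) = 1 := by
  rw [← MeasureTheory.ofReal_integral_eq_lintegral_ofReal (leafWF_integrable ν hL)
    (Filter.Eventually.of_forall hL.1), hL.2.2, ENNReal.ofReal_one]

/-- change of variables for the second leaf along the dimension equality -/
theorem leaf_cast_comp_lintegral {L L' : SPN.LeafT n X} (h : L'.1 = L.1)
    (hφ : Measurable L'.2.2) :
    ∫⁻ y, ENNReal.ofReal (L'.2.2 fun j => y (Fin.cast h j))
        ∂(Measure.pi fun _ : Fin L.1 => ν)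
      = ∫⁻ z, ENNReal.ofReal (L'.2.2 z) ∂(Measure.pi fun _ : Fin L'.1 => ν) := by
  have hmp := MeasureTheory.measurePreserving_piCongrLeft
    (fun _ : Fin L.1 => ν) (finCongr h)
  have hme : Measurable fun y : Fin L.1 → X =>
      ENNReal.ofReal (L'.2.2 fun j => y (Fin.cast h j)) :=
    ENNReal.measurable_ofReal.comp
      (hφ.comp (measurable_pi_lambda _ fun j => measurable_pi_apply _))
  rw [← hmp.lintegral_comp hme]
  refine MeasureTheory.lintegral_congr fun z => ?_
  have hfz : (fun j => ((MeasurableEquiv.piCongrLeft (fun _ : Fin L.1 => X) (finCongr h)) z)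
      (Fin.cast h j)) = z :=
    funext fun j => Equiv.piCongrLeft_apply_apply (fun _ : Fin L.1 => X) (finCongr h) z j
  show ENNReal.ofReal (L'.2.2 fun j =>
      ((MeasurableEquiv.piCongrLeft (fun _ : Fin L.1 => X) (finCongr h)) z) (Fin.cast h j)) = _
  rw [hfz]

theorem leaf_cast_comp_integrable {L L' : SPN.LeafT n X} (h : L'.1 = L.1)
    (hL' : LeafWF ν L') :
    Integrable (fun y => L'.2.2 fun j => y (Fin.cast h j))
      (Measure.pi fun _ : Fin L.1 => ν) := by
  have hmp := MeasureTheory.measurePreserving_piCongrLeft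
    (fun _ : Fin L.1 => ν) (finCongr h)
  have heq : (fun y : Fin L.1 → X => L'.2.2 fun j => y (Fin.cast h j))
      ∘ (MeasurableEquiv.piCongrLeft (fun _ : Fin L.1 => X) (finCongr h))
      = L'.2.2 := by
    funext z
    simp only [Function.comp_apply]
    have hfz : (fun j => ((MeasurableEquiv.piCongrLeft (fun _ : Fin L.1 => X) (finCongr h)) z)
        (Fin.cast h j)) = z :=
      funext fun j => Equiv.piCongrLeft_apply_apply (fun _ : Fin L.1 => X) (finCongr h) z j
    rw [hfz]
  have := (hmp.integrable_comp (g := fun y : Fin L.1 → X => L'.2.2 fun j => y (Fin.cast h j))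
    ?_).mp ?_
  · exact this
  · exact (hL'.2.1.comp
      (measurable_pi_lambda _ fun j => measurable_pi_apply _)).aestronglyMeasurable
  · rw [heq]
    exact leafWF_integrable ν hL'

theorem leafE_le_two {L L' : SPN.LeafT n X} (hL : LeafWF ν L) (hL' : LeafWF ν L') :
    leafE ν L L' ≤ 2 := by
  rw [leafE]
  split
  case isFalse => exact le_trans zero_le_one one_le_two
  case isTrue h =>
    have hbd : ∀ y : Fin L.1 → X,
        ENNReal.ofReal |L.2.2 y - L'.2.2 fun j => y (Fin.cast h j)|
          ≤ ENNReal.ofReal (L.2.2 y)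
            + ENNReal.ofReal (L'.2.2 fun j => y (Fin.cast h j)) := by
      intro y
      rw [← ENNReal.ofReal_add (hL.1 y) (hL'.1 _)]
      apply ENNReal.ofReal_le_ofReal
      have h1 := hL.1 y
      have h2 := hL'.1 (fun j => y (Fin.cast h j))
      exact abs_le.mpr ⟨by linarith, by linarith⟩
    calc ∫⁻ y, ENNReal.ofReal |L.2.2 y - L'.2.2 fun j => y (Fin.cast h j)|
          ∂(Measure.pi fun _ : Fin L.1 => ν)
        ≤ ∫⁻ y, (ENNReal.ofReal (L.2.2 y)
            + ENNReal.ofReal (L'.2.2 fun j => y (Fin.cast h j)))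
          ∂(Measure.pi fun _ : Fin L.1 => ν) := MeasureTheory.lintegral_mono hbd
      _ = (∫⁻ y, ENNReal.ofReal (L.2.2 y) ∂(Measure.pi fun _ : Fin L.1 => ν))
          + ∫⁻ y, ENNReal.ofReal (L'.2.2 fun j => y (Fin.cast h j))
            ∂(Measure.pi fun _ : Fin L.1 => ν) :=
          MeasureTheory.lintegral_add_left
            (ENNReal.measurable_ofReal.comp hL.2.1) _
      _ = 1 + 1 := by
          rw [leafWF_lintegral ν hL, leaf_cast_comp_lintegral ν h hL'.2.1,
            leafWF_lintegral ν hL']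
      _ = 2 := one_add_one_eq_two

theorem leafE_le_eps {L L' : SPN.LeafT n X} (hL : LeafWF ν L) (hL' : LeafWF ν L')
    {ε : ℝ} (hε : SPN.leafTV ν L L' ≤ ε) (h : L'.1 = L.1) :
    leafE ν L L' ≤ ENNReal.ofReal (2 * ε) := by
  rw [leafE, dif_pos h]
  rw [SPN.leafTV, dif_pos h] at hε
  have hInt : Integrable (fun y => |L.2.2 y - L'.2.2 fun j => y (Fin.cast h j)|)
      (Measure.pi fun _ : Fin L.1 => ν) :=
    ((leafWF_integrable ν hL).sub (leaf_cast_comp_integrable ν h hL')).abs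
  rw [← MeasureTheory.ofReal_integral_eq_lintegral_ofReal hInt
    (Filter.Eventually.of_forall fun y => abs_nonneg _)]
  apply ENNReal.ofReal_le_ofReal
  linarith

theorem leafE_eq_zero {L L' : SPN.LeafT n X} (hL : LeafWF ν L) (hL' : LeafWF ν L')
    (hd : L.1 = 0) : leafE ν L L' = 0 := by
  rw [leafE]
  split
  case isFalse => rfl
  case isTrue h =>
    have hone : ∀ (M : SPN.LeafT n X), LeafWF ν M → M.1 = 0 → ∀ y, M.2.2 y = 1 := by
      intro M hM hM0 y
      haveI : IsEmpty (Fin M.1) := by rw [hM0]; infer_instance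
      haveI : Unique (Fin M.1 → X) := Pi.uniqueOfIsEmpty _
      have h1 := hM.2.2
      rw [MeasureTheory.integral_unique] at h1
      rw [measureReal_def, Measure.pi_univ] at h1
      simp only [Finset.univ_eq_empty, Finset.prod_empty, ENNReal.toReal_one, one_smul] at h1
      rw [Unique.eq_default y]
      exact h1
    have hz : ∀ y : Fin L.1 → X,
        ENNReal.ofReal |L.2.2 y - L'.2.2 fun j => y (Fin.cast h j)| = 0 := by
      intro y
      rw [hone L hL hd y, hone L' hL' (h.trans hd) _]
      simp
    calc ∫⁻ y, ENNReal.ofReal |L.2.2 y - L'.2.2 fun j => y (Fin.cast h j)|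
          ∂(Measure.pi fun _ : Fin L.1 => ν)
        = ∫⁻ _, 0 ∂(Measure.pi fun _ : Fin L.1 => ν) :=
          MeasureTheory.lintegral_congr hz
      _ = 0 := MeasureTheory.lintegral_zero

theorem sum_zip_fin' {α β γ : Type*} [AddCommMonoid γ] [Inhabited α] [Inhabited β]
    (f : α × β → γ) (l : List α) (l' : List β) {e : ℕ}
    (h1 : l.length = e) (h2 : l'.length = e) :
    ((l.zip l').map f).sum = ∑ i ∈ Finset.range e, f (l[i]!, l'[i]!) := by
  subst h1
  calc ((l.zip l').map f).sum
      = ∑ i : Fin l.length, f (l.get i, l'.get ⟨i, h2.symm ▸ i.2⟩) :=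
        sum_zip_fin f l l' h2.symm
    _ = ∑ i : Fin l.length, (fun j => f (l[j]!, l'[j]!)) (i : ℕ) := by
        refine Finset.sum_congr rfl fun i _ => ?_
        show _ = f (l[(i : ℕ)]!, l'[(i : ℕ)]!)
        rw [getElem!_pos l (i : ℕ) i.2,
          getElem!_pos l' (i : ℕ) (by omega : (i : ℕ) < l'.length)]
        simp only [List.get_eq_getElem]
    _ = ∑ i ∈ Finset.range l.length, f (l[i]!, l'[i]!) :=
        Fin.sum_univ_eq_sum_range (fun j => f (l[j]!, l'[j]!)) l.length

theorem weighted_scope {t : SPN n X} (ht : t.WF ν) :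
    ((t.pathWeights.zip t.leaves).map
      fun p => ENNReal.ofReal p.1 * (p.2.1 : ℝ≥0∞)).sum ≤ (t.scope.card : ℝ≥0∞) := by
  induction t with
  | leaf d emb g =>
    simp [SPN.pathWeights, SPN.leaves, SPN.scope, List.zip, List.zipWith]
  | prod m c ih =>
    obtain ⟨hm0, hwf, hdisj⟩ := ht
    simp only [SPN.pathWeights, SPN.leaves, SPN.scope]
    rw [sum_map_zip_flatten_ofFn _ (fun i => (c i).pathWeights) (fun i => (c i).leaves)
      (fun i => by rw [length_pathWeights, length_leaves])]
    rw [Finset.card_biUnion fun i _ j _ hij => hdisj i j hij, Nat.cast_sum]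
    exact Finset.sum_le_sum fun i _ => ih i (hwf i)
  | sum m w c ih =>
    obtain ⟨hm0, hwf, hsceq, hw0, hw1⟩ := ht
    simp only [SPN.pathWeights, SPN.leaves, SPN.scope]
    rw [sum_map_zip_flatten_ofFn _ (fun i => (c i).pathWeights.map fun r => w i * r)
      (fun i => (c i).leaves)
      (fun i => by rw [List.length_map, length_pathWeights, length_leaves])]
    have hscard : ∀ i : Fin m,
        ((c i).scope.card : ℝ≥0∞) = ((Finset.univ.biUnion fun i => (c i).scope).card : ℝ≥0∞) := by
      intro i
      congr 2
      apply Finset.ext; intro j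
      simp only [Finset.mem_biUnion, Finset.mem_univ, true_and]
      exact ⟨fun hj => ⟨i, hj⟩, fun ⟨i', hj⟩ => (hsceq i' i) ▸ hj⟩
    have hchunk : ∀ i : Fin m,
        ((((c i).pathWeights.map fun r => w i * r).zip (c i).leaves).map
          fun p => ENNReal.ofReal p.1 * (p.2.1 : ℝ≥0∞)).sum
        ≤ ENNReal.ofReal (w i) * ((Finset.univ.biUnion fun i => (c i).scope).card : ℝ≥0∞) := by
      intro i
      rw [List.zip_map_left, List.map_map]
      have hc : ∀ p ∈ (c i).pathWeights.zip (c i).leaves,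
          ((fun p : ℝ × SPN.LeafT n X => ENNReal.ofReal p.1 * (p.2.1 : ℝ≥0∞))
            ∘ Prod.map (fun r => w i * r) id) p
          = ENNReal.ofReal (w i) * (ENNReal.ofReal p.1 * (p.2.1 : ℝ≥0∞)) := by
        intro p hp
        have hp1 : 0 ≤ p.1 := pathWeights_nonneg ν (hwf i) p.1 (List.of_mem_zip hp).1
        simp only [Function.comp_apply, Prod.map_fst, Prod.map_snd, Prod.map_apply, id_eq]
        rw [ENNReal.ofReal_mul (hw0 i), mul_assoc]
      rw [List.map_congr_left hc, List.sum_map_mul_left]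
      rw [← hscard i]
      exact mul_le_mul_right (ih i (hwf i)) _
    calc ∑ i, ((((c i).pathWeights.map fun r => w i * r).zip (c i).leaves).map
          fun p => ENNReal.ofReal p.1 * (p.2.1 : ℝ≥0∞)).sum
        ≤ ∑ i, ENNReal.ofReal (w i)
            * ((Finset.univ.biUnion fun i => (c i).scope).card : ℝ≥0∞) :=
          Finset.sum_le_sum fun i _ => hchunk i
      _ = ((Finset.univ.biUnion fun i => (c i).scope).card : ℝ≥0∞) := by
          rw [← Finset.sum_mul, ← ENNReal.ofReal_sum_of_nonneg fun i _ => hw0 i, hw1,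
            ENNReal.ofReal_one, one_mul]

end LeafBounds

end SPNAux

open SPNAux ENNReal

/-- Let `f` and `fh` be probability densities represented by two
tree-structured SPNs over an `n`-dimensional product domain that have the same structure,
with `k` mixing weights and `e` leaves in total.  Let `N` be a subset of the leaf indices and
`ε', α ∈ [0,1]`.  If every pair of corresponding leaves with index outside `N` is `ε'`-close
in total variation distance and every pair of corresponding mixing weights differs by at most
`α`, then `TV(f, f̂) ≤ ∑_{i ∈ N} Wᵢ + n ε' + k α / 2`, where `Wᵢ` is the path weight of the
`i`-th leaf of `f`. -/
theorem stmt5 {n : ℕ} {X : Type} [MeasurableSpace X] (ν : Measure X) [SigmaFinite ν]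
    (f fh : SPN n X) (hf : f.WF ν) (hfh : fh.WF ν)
    (hscope : f.scope = Finset.univ) (hstruct : SPN.SameStruct f fh)
    (e k : ℕ) (he : f.numLeaves = e) (hk : f.numWeights = k)
    (N : Finset ℕ) (hN : N ⊆ Finset.range e)
    (ε' α : ℝ) (hε' : ε' ∈ Set.Icc (0:ℝ) 1) (hα : α ∈ Set.Icc (0:ℝ) 1)
    (hleaf : ∀ i, i < f.leaves.length → i ∉ N →
      SPN.leafTV ν (f.leaves[i]!) (fh.leaves[i]!) ≤ ε')
    (hw : ∀ j, j < f.weightsList.length →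
      |fh.weightsList[j]! - f.weightsList[j]!| ≤ α) :
    SPN.tv ν f.density fh.density ≤
      (∑ i ∈ N, f.pathWeights[i]!) + n * ε' + k * α / 2 := by
  classical
  obtain ⟨hε'0, hε'1⟩ := hε'
  obtain ⟨hα0, hα1⟩ := hα
  have hnl' := sameStruct_numLeaves hstruct
  have hlpw : f.pathWeights.length = e := by rw [length_pathWeights, he]
  have hllv : f.leaves.length = e := by rw [length_leaves, he]
  have hllv' : fh.leaves.length = e := by rw [length_leaves, ← hnl', he]
  have hlwl : f.weightsList.length = k := by rw [length_weightsList, hk]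
  have hlwl' : fh.weightsList.length = k := by
    rw [length_weightsList, ← sameStruct_numWeights hstruct, hk]
  have hNlt : ∀ i ∈ N, i < e := fun i hi => Finset.mem_range.mp (hN hi)
  have hpwN : ∀ i ∈ N, 0 ≤ f.pathWeights[i]! := by
    intro i hi
    rw [getElem!_pos f.pathWeights i (by rw [hlpw]; exact hNlt i hi)]
    exact pathWeights_nonneg ν hf _ (List.getElem_mem _)
  have hsumN : 0 ≤ ∑ i ∈ N, f.pathWeights[i]! := Finset.sum_nonneg hpwN
  set R : ℝ := (∑ i ∈ N, f.pathWeights[i]!) + n * ε' + k * α / 2 with hRdef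
  have hR0 : 0 ≤ R := by
    have h1 : 0 ≤ (n : ℝ) * ε' := mul_nonneg (Nat.cast_nonneg n) hε'0
    have h2 : 0 ≤ (k : ℝ) * α / 2 := by
      have := mul_nonneg (Nat.cast_nonneg (α := ℝ) k) hα0
      linarith
    rw [hRdef]
    linarith
  have hfst := sameStruct_leaves_fst hstruct
  have hdim : ∀ i, i < e → (fh.leaves[i]!).1 = (f.leaves[i]!).1 := by
    intro i hi
    have hb1 : i < f.leaves.length := by rw [hllv]; exact hi
    have hb2 : i < fh.leaves.length := by rw [hllv']; exact hi
    rw [getElem!_pos fh.leaves i hb2, getElem!_pos f.leaves i hb1]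
    have h1 : (fh.leaves.map Sigma.fst)[i]'(lt_of_lt_of_eq hb2 (List.length_map _).symm)
        = (f.leaves.map Sigma.fst)[i]'(lt_of_lt_of_eq hb1 (List.length_map _).symm) := by
      exact List.getElem_of_eq hfst _
    exact (List.getElem_map ..).symm.trans (h1.trans (List.getElem_map ..))
  have hLWF : ∀ i, i < e → LeafWF ν (f.leaves[i]!) := by
    intro i hi
    rw [getElem!_pos f.leaves i (by rw [hllv]; exact hi)]
    exact leaves_WF ν hf _ (List.getElem_mem _)
  have hLWF' : ∀ i, i < e → LeafWF ν (fh.leaves[i]!) := by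
    intro i hi
    rw [getElem!_pos fh.leaves i (by rw [hllv']; exact hi)]
    exact leaves_WF ν hfh _ (List.getElem_mem _)
  have hzl : ∀ i, i < e → (f.leaves.zip fh.leaves)[i]! = (f.leaves[i]!, fh.leaves[i]!) := by
    intro i hi
    rw [getElem!_pos (f.leaves.zip fh.leaves) i
        (by rw [List.length_zip, hllv, hllv', min_self]; exact hi),
      List.getElem_zip, getElem!_pos f.leaves i (by rw [hllv]; exact hi),
      getElem!_pos fh.leaves i (by rw [hllv']; exact hi)]
  have hSAeq : SA ν f fh = ∑ i ∈ Finset.range e,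
      ENNReal.ofReal (f.pathWeights[i]!) * leafE ν (f.leaves[i]!) (fh.leaves[i]!) := by
    rw [SA, sum_zip_fin' _ f.pathWeights (f.leaves.zip fh.leaves) hlpw
      (by rw [List.length_zip, hllv, hllv', min_self])]
    refine Finset.sum_congr rfl fun i hi => ?_
    rw [hzl i (Finset.mem_range.mp hi)]
  -- weighted scope bound
  have hws : ∑ i ∈ Finset.range e,
      ENNReal.ofReal (f.pathWeights[i]!) * (((f.leaves[i]!).1 : ℕ) : ℝ≥0∞)
        ≤ (n : ℝ≥0∞) := by
    have h1 := weighted_scope ν hf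
    rw [sum_zip_fin' _ f.pathWeights f.leaves hlpw hllv] at h1
    rw [hscope] at h1
    simpa using h1
  -- SA bound
  have hSAle : SA ν f fh ≤ ENNReal.ofReal (2 * ε') * (n : ℝ≥0∞)
      + ENNReal.ofReal (2 * ∑ i ∈ N, f.pathWeights[i]!) := by
    rw [hSAeq, ← Finset.sum_sdiff hN]
    refine add_le_add ?h1 ?h2
    case h2 =>
      calc ∑ i ∈ N, ENNReal.ofReal (f.pathWeights[i]!)
            * leafE ν (f.leaves[i]!) (fh.leaves[i]!)
          ≤ ∑ i ∈ N, ENNReal.ofReal (f.pathWeights[i]!) * 2 := by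
            refine Finset.sum_le_sum fun i hi => ?_
            exact mul_le_mul_right
              (leafE_le_two ν (hLWF i (hNlt i hi)) (hLWF' i (hNlt i hi))) _
        _ = ∑ i ∈ N, ENNReal.ofReal (2 * f.pathWeights[i]!) := by
            refine Finset.sum_congr rfl fun i hi => ?_
            rw [ENNReal.ofReal_mul (by norm_num : (0:ℝ) ≤ 2), mul_comm]
            norm_num
        _ = ENNReal.ofReal (∑ i ∈ N, 2 * f.pathWeights[i]!) :=
            (ENNReal.ofReal_sum_of_nonneg fun i hi =>
              mul_nonneg (by norm_num) (hpwN i hi)).symm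
        _ = ENNReal.ofReal (2 * ∑ i ∈ N, f.pathWeights[i]!) := by
            rw [Finset.mul_sum]
    case h1 =>
      have hterm : ∀ i ∈ Finset.range e \ N,
          ENNReal.ofReal (f.pathWeights[i]!) * leafE ν (f.leaves[i]!) (fh.leaves[i]!)
          ≤ ENNReal.ofReal (2 * ε')
              * (ENNReal.ofReal (f.pathWeights[i]!) * (((f.leaves[i]!).1 : ℕ) : ℝ≥0∞)) := by
        intro i hi
        obtain ⟨hir, hiN⟩ := Finset.mem_sdiff.mp hi
        have hie := Finset.mem_range.mp hir
        by_cases hd : (f.leaves[i]!).1 = 0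
        · rw [leafE_eq_zero ν (hLWF i hie) (hLWF' i hie) hd, hd]
          simp
        · have hle := leafE_le_eps ν (hLWF i hie) (hLWF' i hie)
            (hleaf i (by rw [hllv]; exact hie) hiN) (hdim i hie)
          have hd1 : (1 : ℝ≥0∞) ≤ (((f.leaves[i]!).1 : ℕ) : ℝ≥0∞) := by
            exact_mod_cast Nat.one_le_cast.mpr (Nat.pos_of_ne_zero hd)
          calc ENNReal.ofReal (f.pathWeights[i]!) * leafE ν (f.leaves[i]!) (fh.leaves[i]!)
              ≤ ENNReal.ofReal (f.pathWeights[i]!) * ENNReal.ofReal (2 * ε') :=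
                mul_le_mul_right hle _
            _ = ENNReal.ofReal (2 * ε') * ENNReal.ofReal (f.pathWeights[i]!) := mul_comm _ _
            _ ≤ ENNReal.ofReal (2 * ε')
                * (ENNReal.ofReal (f.pathWeights[i]!) * (((f.leaves[i]!).1 : ℕ) : ℝ≥0∞)) :=
                mul_le_mul_right (le_mul_of_one_le_right zero_le hd1) _
      calc ∑ i ∈ Finset.range e \ N, ENNReal.ofReal (f.pathWeights[i]!)
            * leafE ν (f.leaves[i]!) (fh.leaves[i]!)
          ≤ ∑ i ∈ Finset.range e \ N, ENNReal.ofReal (2 * ε')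
              * (ENNReal.ofReal (f.pathWeights[i]!) * (((f.leaves[i]!).1 : ℕ) : ℝ≥0∞)) :=
            Finset.sum_le_sum hterm
        _ ≤ ∑ i ∈ Finset.range e, ENNReal.ofReal (2 * ε')
              * (ENNReal.ofReal (f.pathWeights[i]!) * (((f.leaves[i]!).1 : ℕ) : ℝ≥0∞)) :=
            Finset.sum_le_sum_of_subset (Finset.sdiff_subset)
        _ = ENNReal.ofReal (2 * ε') * ∑ i ∈ Finset.range e,
              ENNReal.ofReal (f.pathWeights[i]!) * (((f.leaves[i]!).1 : ℕ) : ℝ≥0∞) :=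
            (Finset.mul_sum _ _ _).symm
        _ ≤ ENNReal.ofReal (2 * ε') * (n : ℝ≥0∞) := mul_le_mul_right hws _
  -- SB bound
  have hSBle : SB f fh ≤ (k : ℝ≥0∞) * ENNReal.ofReal α := by
    rw [SB, sum_zip_fin' _ f.weightsList fh.weightsList hlwl hlwl']
    calc ∑ j ∈ Finset.range k, ENNReal.ofReal |fh.weightsList[j]! - f.weightsList[j]!|
        ≤ ∑ _j ∈ Finset.range k, ENNReal.ofReal α :=
          Finset.sum_le_sum fun j hj => ENNReal.ofReal_le_ofReal
            (hw j (by rw [hlwl]; exact Finset.mem_range.mp hj))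
      _ = (k : ℝ≥0∞) * ENNReal.ofReal α := by
          rw [Finset.sum_const, Finset.card_range, nsmul_eq_mul]
  -- the lintegral bound
  have hmeasΔ : Measurable fun y : Fin n → X => |f.density y - fh.density y| :=
    ((density_measurable ν hf).sub (density_measurable ν hfh)).abs
  have hE : (∫⁻ y, ENNReal.ofReal |f.density y - fh.density y|
      ∂(Measure.pi fun _ : Fin n => ν)) ≤ ENNReal.ofReal (2 * R) := by
    have hmain : (∫⁻ y, ENNReal.ofReal |f.density y - fh.density y|
        ∂(Measure.pi fun _ : Fin n => ν)) ≤ SA ν f fh + SB f fh := by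
      rcases isEmpty_or_nonempty (Fin n → X) with hemp | hne
      · rw [MeasureTheory.lintegral_of_isEmpty]
        exact zero_le
      · obtain ⟨x⟩ := hne
        rw [MeasureTheory.lintegral_eq_lmarginal_univ x, ← hscope]
        exact main ν hstruct hf hfh x
    refine le_trans hmain (le_trans (add_le_add hSAle hSBle) (le_of_eq ?_))
    have e1 : ENNReal.ofReal (2 * ε') * (n : ℝ≥0∞) = ENNReal.ofReal (2 * (n * ε')) := by
      rw [← ENNReal.ofReal_natCast n,
        ← ENNReal.ofReal_mul (by linarith : (0:ℝ) ≤ 2 * ε')]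
      congr 1
      ring
    have e2 : (k : ℝ≥0∞) * ENNReal.ofReal α = ENNReal.ofReal (k * α) := by
      rw [← ENNReal.ofReal_natCast k,
        ← ENNReal.ofReal_mul (Nat.cast_nonneg k)]
    rw [e1, e2,
      ← ENNReal.ofReal_add (by positivity) (mul_nonneg (by norm_num) hsumN),
      ← ENNReal.ofReal_add (by positivity) (mul_nonneg (Nat.cast_nonneg k) hα0)]
    congr 1
    rw [hRdef]
    ring
  have h2R : (0:ℝ) ≤ 2 * R := by linarith
  have htoReal := ENNReal.toReal_le_of_le_ofReal h2R hE
  show (1/2 : ℝ) * ∫ y, |f.density y - fh.density y|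
      ∂(Measure.pi fun _ : Fin n => ν) ≤ R
  rw [MeasureTheory.integral_eq_lintegral_of_nonneg_ae
    (Filter.Eventually.of_forall fun y => abs_nonneg _) hmeasΔ.aestronglyMeasurable]
  refine le_trans (mul_le_mul_of_nonneg_left htoReal (by norm_num : (0:ℝ) ≤ 1/2)) ?_
  rw [hRdef]
  ring_nf
  linarith
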